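/- Let X be a d-complex, k ≤ d, A ⊆ X(k) and 0 < η < 1. If ‖A‖ < η^{2^{k+1}}, then the unique (−1)-face, the empty set, is not a fat face: ∅ ∉ S_η^{−1}(A). -/

import Mathlib

open Finset
open scoped symmDiff

noncomputable section

namespace HDExpansion

/-- The faces of cardinality `m` (i.e. of dimension `m - 1`) of a complex `X`. -/
def facesC (X : Finset (Finset ℕ)) (m : ℕ) : Finset (Finset ℕ) :=
  X.filter fun σ => σ.card = m

/-- `X` is a finite, pure, `d`-dimensional abstract simplicial complex:
it is nonempty, closed under subsets, and every face is contained in a face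
of cardinality `d + 1`. -/
def IsComplex (X : Finset (Finset ℕ)) (d : ℕ) : Prop :=
  X.Nonempty ∧ (∀ σ ∈ X, ∀ τ ⊆ σ, τ ∈ X) ∧
    ∀ σ ∈ X, ∃ F ∈ X, σ ⊆ F ∧ F.card = d + 1

/-- The weight of a face `σ` in the `d`-complex `X`:
`w(σ) = |{F ∈ X(d) : σ ⊆ F}| / (binom(d+1,|σ|)·|X(d)|)`. -/
def weightC (X : Finset (Finset ℕ)) (d : ℕ) (σ : Finset ℕ) : ℝ :=
  (((facesC X (d + 1)).filter fun F => σ ⊆ F).card : ℝ) /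
    (((d + 1).choose σ.card * (facesC X (d + 1)).card : ℕ) : ℝ)

/-- The norm of a cochain: `‖A‖ = Σ_{σ∈A} w(σ)`. -/
def normC (X : Finset (Finset ℕ)) (d : ℕ) (A : Finset (Finset ℕ)) : ℝ :=
  ∑ σ ∈ A, weightC X d σ

/-- The coboundary map, sending a cochain of faces of cardinality `m`
(dimension `m-1`) to the set of faces of cardinality `m+1` containing an odd
number of its elements. -/
def cobC (X : Finset (Finset ℕ)) (m : ℕ) (A : Finset (Finset ℕ)) : Finset (Finset ℕ) :=
  (facesC X (m + 1)).filter fun τ => (A.filter fun σ => σ ⊆ τ).card % 2 = 1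

/-- `A` (a cochain of faces of cardinality `m`, i.e. dimension `m-1`) is a
coboundary: `A ∈ B^{m-1}`. -/
def IsCobound (X : Finset (Finset ℕ)) (m : ℕ) (A : Finset (Finset ℕ)) : Prop :=
  ∃ γ ⊆ facesC X (m - 1), cobC X (m - 1) γ = A

/-- `A` (a cochain of faces of cardinality `m`, i.e. dimension `m-1`) is a
cocycle: `A ∈ Z^{m-1}`. -/
def IsCocycle (X : Finset (Finset ℕ)) (m : ℕ) (A : Finset (Finset ℕ)) : Prop :=
  A ⊆ facesC X m ∧ cobC X m A = ∅

/-- `min_{b ∈ B^{m-1}} ‖A + b‖` (cochain sum is symmetric difference `∆`). -/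
def distB (X : Finset (Finset ℕ)) (d m : ℕ) (A : Finset (Finset ℕ)) : ℝ :=
  sInf {r : ℝ | ∃ b, IsCobound X m b ∧ r = normC X d (A ∆ b)}

/-- `min_{z ∈ Z^{m-1}} ‖A + z‖` (cochain sum is symmetric difference `∆`). -/
def distZ (X : Finset (Finset ℕ)) (d m : ℕ) (A : Finset (Finset ℕ)) : ℝ :=
  sInf {r : ℝ | ∃ z, IsCocycle X m z ∧ r = normC X d (A ∆ z)}

/-- The link `X_σ = {τ : σ ∩ τ = ∅, σ ∪ τ ∈ X}`. -/
def link (X : Finset (Finset ℕ)) (σ : Finset ℕ) : Finset (Finset ℕ) :=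
  (X.filter fun ρ => σ ⊆ ρ).image fun ρ => ρ \ σ

/-- The localization `I_σ(A) = {τ ∈ X_σ : τ ∪ σ ∈ A}`. -/
def locF (σ : Finset ℕ) (A : Finset (Finset ℕ)) : Finset (Finset ℕ) :=
  (A.filter fun ρ => σ ⊆ ρ).image fun ρ => ρ \ σ

/-- The lifting `I^σ(A) = {τ ∪ σ : τ ∈ A}`. -/
def liftF (σ : Finset ℕ) (A : Finset (Finset ℕ)) : Finset (Finset ℕ) :=
  A.image fun τ => τ ∪ σ

/-- A cochain of faces of cardinality `m` is minimal if `‖A‖ ≤ ‖A + b‖` for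
every coboundary `b`. -/
def IsMinimal (Y : Finset (Finset ℕ)) (dY m : ℕ) (A : Finset (Finset ℕ)) : Prop :=
  ∀ b, IsCobound Y m b → normC Y dY A ≤ normC Y dY (A ∆ b)

/-- A cochain of faces of cardinality `m` is locally minimal if all its
localizations to links of nonempty faces are minimal. -/
def IsLocallyMinimal (X : Finset (Finset ℕ)) (d m : ℕ) (A : Finset (Finset ℕ)) : Prop :=
  ∀ σ ∈ X, σ ≠ ∅ → IsMinimal (link X σ) (d - σ.card) (m - σ.card) (locF σ A)

/-- `Y` (a `dY`-complex) is a `β`-coboundary expander: for every dimension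
`k = m - 1` with `0 ≤ k ≤ dY - 1` and every `k`-cochain `A ∉ B^k`,
`‖δA‖ ≥ β · min_{b ∈ B^k} ‖A+b‖`. -/
def CobExpander (Y : Finset (Finset ℕ)) (dY : ℕ) (β : ℝ) : Prop :=
  ∀ m : ℕ, 1 ≤ m → m ≤ dY → ∀ A ⊆ facesC Y m, ¬ IsCobound Y m A →
    β * distB Y dY m A ≤ normC Y dY (cobC Y m A)

/-- `E(A,A)`: the edges of `Y` with both vertices in the vertex set `A`
(vertices are identified with singleton faces). -/
def edgesIn (Y : Finset (Finset ℕ)) (A : Finset (Finset ℕ)) : Finset (Finset ℕ) :=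
  (facesC Y 2).filter fun e => ∀ v ∈ e, ({v} : Finset ℕ) ∈ A

/-- `Y` (a `dY`-complex) is an `α`-skeleton expander. -/
def SkelExpander (Y : Finset (Finset ℕ)) (dY : ℕ) (α : ℝ) : Prop :=
  ∀ A ⊆ facesC Y 1, normC Y dY (edgesIn Y A) ≤ 4 * (normC Y dY A ^ 2 + α * normC Y dY A)

/-- The `m`-skeleton of a complex (all faces of dimension at most `m`). -/
def skeleton (X : Finset (Finset ℕ)) (m : ℕ) : Finset (Finset ℕ) :=
  X.filter fun σ => σ.card ≤ m + 1

open scoped Classical in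
/-- `fatD X d kc η A j` is the set of fat faces `S_η^{k-j}(A)` where `kc = k+1`
is the cardinality of the faces of `A` (downward induction on `j`). -/
def fatD (X : Finset (Finset ℕ)) (d kc : ℕ) (η : ℝ) (A : Finset (Finset ℕ)) :
    ℕ → Finset (Finset ℕ)
  | 0 => A
  | j + 1 =>
    (facesC X (kc - (j + 1))).filter fun σ =>
      η ^ 2 ^ j ≤ normC (link X σ) (d - σ.card) (locF σ (fatD X d kc η A j))

/-- The fat faces `S_η^i(A)` of dimension `i` (with `-1 ≤ i ≤ k`), for a
`k`-dimensional cochain `A` of the `d`-complex `X`. -/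
def fatS (X : Finset (Finset ℕ)) (d k : ℕ) (η : ℝ) (A : Finset (Finset ℕ)) (i : ℤ) :
    Finset (Finset ℕ) :=
  fatD X d (k + 1) η A ((k : ℤ) - i).toNat

open scoped Classical in
/-- The fat ladders `L_η(A,σ)` sitting on a fat `i`-face `σ`. -/
def ladderL (X : Finset (Finset ℕ)) (d k : ℕ) (η : ℝ) (A : Finset (Finset ℕ))
    (i : ℤ) (σ : Finset ℕ) : Finset (Finset ℕ) :=
  A.filter fun t => ∃ c : ℤ → Finset ℕ, c i = σ ∧ c (k : ℤ) = t ∧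
    (∀ j : ℤ, i ≤ j → j ≤ (k : ℤ) → c j ∈ fatS X d k η A j) ∧
    (∀ j : ℤ, i ≤ j → j < (k : ℤ) → c j ⊆ c (j + 1))

/-- The `i`-fat-ladders `L_η(A,i) = ⋃_{σ ∈ S_η^i(A)} L_η(A,σ)`. -/
def ladderAll (X : Finset (Finset ℕ)) (d k : ℕ) (η : ℝ) (A : Finset (Finset ℕ))
    (i : ℤ) : Finset (Finset ℕ) :=
  (fatS X d k η A i).biUnion fun σ => ladderL X d k η A i σ

open scoped Classical in
/-- The degenerate faces `Υ_η(A)`: the `(k+1)`-dimensional faces containing a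
dead-end, i.e. two equal-dimensional fat faces whose intersection is a
codimension-1 non-fat face. -/
def UpsilonF (X : Finset (Finset ℕ)) (d k : ℕ) (η : ℝ) (A : Finset (Finset ℕ)) :
    Finset (Finset ℕ) :=
  (facesC X (k + 2)).filter fun p => ∃ i : ℤ, 0 ≤ i ∧ i ≤ (k : ℤ) ∧
    ∃ σ ∈ fatS X d k η A i, ∃ σ' ∈ fatS X d k η A i,
      σ ⊆ p ∧ σ' ⊆ p ∧ σ'.card = σ.card ∧ (σ ∩ σ').card + 1 = σ.card ∧
      σ ∩ σ' ∉ fatS X d k η A (i - 1)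



lemma weightC_nonneg (X : Finset (Finset ℕ)) (d : ℕ) (σ : Finset ℕ) :
    0 ≤ weightC X d σ := by
  unfold weightC; positivity

lemma normC_nonneg (X : Finset (Finset ℕ)) (d : ℕ) (A : Finset (Finset ℕ)) :
    0 ≤ normC X d A :=
  Finset.sum_nonneg fun σ _ => weightC_nonneg X d σ

lemma facesC_link_filter (X : Finset (Finset ℕ)) (σ τ : Finset ℕ) (t : ℕ)
    (hdisj : Disjoint σ τ) :
    ((facesC (link X σ) t).filter fun F => τ ⊆ F) =
      ((facesC X (t + σ.card)).filter fun F => σ ∪ τ ⊆ F).image fun F => F \ σ := by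
  ext F'
  simp only [facesC, link, mem_filter, mem_image, Finset.union_subset_iff]
  constructor
  · rintro ⟨⟨⟨ρ, ⟨hρX, hσρ⟩, rfl⟩, hcard⟩, hτ⟩
    refine ⟨ρ, ⟨⟨hρX, ?_⟩, hσρ, hτ.trans (sdiff_subset)⟩, rfl⟩
    rw [Finset.card_sdiff_of_subset hσρ] at hcard
    have := Finset.card_le_card hσρ
    omega
  · rintro ⟨ρ, ⟨⟨hρX, hcard⟩, hσρ, hτρ⟩, rfl⟩
    refine ⟨⟨⟨ρ, ⟨hρX, hσρ⟩, rfl⟩, ?_⟩, Finset.subset_sdiff.mpr ⟨hτρ, hdisj.symm⟩⟩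
    rw [Finset.card_sdiff_of_subset hσρ]
    omega

lemma card_filter_link (X : Finset (Finset ℕ)) (σ τ : Finset ℕ) (t : ℕ)
    (hdisj : Disjoint σ τ) :
    ((facesC (link X σ) t).filter fun F => τ ⊆ F).card =
      ((facesC X (t + σ.card)).filter fun F => σ ∪ τ ⊆ F).card := by
  rw [facesC_link_filter X σ τ t hdisj]
  apply Finset.card_image_of_injOn
  intro x hx y hy hxy
  simp only [Finset.coe_filter, Set.mem_setOf_eq, Finset.union_subset_iff] at hx hy
  dsimp only at hxy
  have h2 : x \ σ ∪ σ = y \ σ ∪ σ := by rw [hxy]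
  rwa [Finset.sdiff_union_of_subset hx.2.1, Finset.sdiff_union_of_subset hy.2.1] at h2

lemma card_facesC_link (X : Finset (Finset ℕ)) (σ : Finset ℕ) (t : ℕ) :
    (facesC (link X σ) t).card = ((facesC X (t + σ.card)).filter fun F => σ ⊆ F).card := by
  have h := card_filter_link X σ ∅ t (Finset.disjoint_empty_right σ)
  simpa using h

lemma weight_link (X : Finset (Finset ℕ)) (d : ℕ) (σ τ : Finset ℕ) (hστ : Disjoint σ τ)
    (hσd : σ.card ≤ d) (hcard : σ.card + τ.card ≤ d + 1) :
    weightC X d σ * weightC (link X σ) (d - σ.card) τ =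
      weightC X d (σ ∪ τ) / (((σ.card + τ.card).choose σ.card : ℕ) : ℝ) := by
  have ha : d - σ.card + 1 = d + 1 - σ.card := by omega
  have hts : d + 1 - σ.card + σ.card = d + 1 := by omega
  set a := σ.card with hadef
  set b := τ.card with hbdef
  set ND := (facesC X (d + 1)).card with hND
  set Nσ := ((facesC X (d + 1)).filter fun F => σ ⊆ F).card with hNσ
  set Nστ := ((facesC X (d + 1)).filter fun F => σ ∪ τ ⊆ F).card with hNστ
  have hlinkcard : (facesC (link X σ) (d - a + 1)).card = Nσ := by
    rw [ha, card_facesC_link X σ (d+1-a), hts]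
  have hlinkfilter : ((facesC (link X σ) (d - a + 1)).filter fun F => τ ⊆ F).card = Nστ := by
    rw [ha, card_filter_link X σ τ (d+1-a) hστ, hts]
  have hcardστ : (σ ∪ τ).card = a + b := Finset.card_union_of_disjoint hστ
  unfold weightC
  rw [hlinkcard, hlinkfilter, hcardστ]
  rw [← hND, ← hNσ, ← hNστ, ← hadef]
  have hsub : Nστ ≤ Nσ := by
    apply Finset.card_le_card
    intro F hF
    rw [Finset.mem_filter] at hF ⊢
    exact ⟨hF.1, (Finset.subset_union_left).trans hF.2⟩
  by_cases hNσ0 : Nσ = 0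
  · have : Nστ = 0 := by omega
    simp [this, hNσ0]
  · have hND0 : ND ≠ 0 := by
      intro h
      apply hNσ0
      have hss : ((facesC X (d + 1)).filter fun F => σ ⊆ F) ⊆ facesC X (d+1) :=
        Finset.filter_subset _ _
      have := Finset.card_le_card hss
      omega
    have hc1 : (d+1).choose a ≠ 0 := (Nat.choose_pos (by omega)).ne'
    have hc2 : (d-a+1).choose b ≠ 0 := (Nat.choose_pos (by omega)).ne'
    have hc3 : (d+1).choose (a+b) ≠ 0 := (Nat.choose_pos (by omega)).ne'
    have hc4 : (a+b).choose a ≠ 0 := (Nat.choose_pos (by omega)).ne'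
    have key : ((d+1).choose (a+b) : ℝ) * ((a+b).choose a : ℝ)
        = ((d+1).choose a : ℝ) * ((d-a+1).choose b : ℝ) := by
      have hcm := Nat.choose_mul (n := d+1) (k := a+b) (s := a) (by omega)
      have h2 : d + 1 - a = d - a + 1 := by omega
      have h3 : a + b - a = b := by omega
      rw [h2, h3] at hcm
      exact_mod_cast hcm
    have hNσR : (Nσ : ℝ) ≠ 0 := Nat.cast_ne_zero.mpr hNσ0
    have hNDR : (ND : ℝ) ≠ 0 := Nat.cast_ne_zero.mpr hND0
    have hc1R : ((d+1).choose a : ℝ) ≠ 0 := Nat.cast_ne_zero.mpr hc1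
    have hc2R : ((d-a+1).choose b : ℝ) ≠ 0 := Nat.cast_ne_zero.mpr hc2
    have hc3R : ((d+1).choose (a+b) : ℝ) ≠ 0 := Nat.cast_ne_zero.mpr hc3
    have hc4R : ((a+b).choose a : ℝ) ≠ 0 := Nat.cast_ne_zero.mpr hc4
    push_cast
    rw [div_mul_div_comm, div_div, div_eq_div_iff
      (by simp only [ne_eq, mul_eq_zero, not_or]; exact ⟨⟨hc1R, hNDR⟩, hc2R, hNσR⟩)
      (by simp only [ne_eq, mul_eq_zero, not_or]; exact ⟨⟨hc3R, hNDR⟩, hc4R⟩)]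
    linear_combination (Nστ : ℝ) * (Nσ : ℝ) * (ND : ℝ) * key

lemma sum_weight_loc (X : Finset (Finset ℕ)) (d m : ℕ)
    (hdc : ∀ σ ∈ X, ∀ τ ⊆ σ, τ ∈ X)
    (hm : 1 ≤ m) (hmd : m ≤ d + 1) (B : Finset (Finset ℕ)) (hB : B ⊆ facesC X m) :
    ∑ σ ∈ facesC X (m - 1), weightC X d σ * normC (link X σ) (d - σ.card) (locF σ B)
      = normC X d B := by
  classical
  have hch : m.choose (m-1) = m := by
    have h1 : m.choose (m-1) = m.choose 1 := by
      have := Nat.choose_symm (n := m) (k := 1) (by omega)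
      simpa using this
    rw [h1, Nat.choose_one_right]
  have step1 : ∀ σ ∈ facesC X (m-1),
      weightC X d σ * normC (link X σ) (d - σ.card) (locF σ B)
        = ∑ ρ ∈ B.filter (fun ρ => σ ⊆ ρ), weightC X d ρ / (m : ℝ) := by
    intro σ hσ
    simp only [facesC, Finset.mem_filter] at hσ
    have hσc : σ.card = m - 1 := hσ.2
    unfold normC locF
    rw [Finset.mul_sum, Finset.sum_image ?inj]
    case inj =>
      intro x hx y hy hxy
      simp only [Finset.coe_filter, Set.mem_setOf_eq] at hx hy
      dsimp only at hxy
      have h2 : x \ σ ∪ σ = y \ σ ∪ σ := by rw [hxy]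
      rwa [Finset.sdiff_union_of_subset hx.2, Finset.sdiff_union_of_subset hy.2] at h2
    apply Finset.sum_congr rfl
    intro ρ hρ
    rw [Finset.mem_filter] at hρ
    have hρc : ρ.card = m := (Finset.mem_filter.mp (hB hρ.1)).2
    have hdisj : Disjoint σ (ρ \ σ) := Finset.disjoint_sdiff
    have hsd : (ρ \ σ).card = 1 := by
      rw [Finset.card_sdiff_of_subset hρ.2]
      omega
    have hwl := weight_link X d σ (ρ \ σ) hdisj (by omega) (by rw [hσc, hsd]; omega)
    rw [Finset.union_sdiff_of_subset hρ.2] at hwl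
    rw [hwl, hσc, hsd]
    congr 1
    have e1 : m - 1 + 1 = m := by omega
    rw [e1]
    exact_mod_cast congrArg (Nat.cast (R := ℝ)) hch
  rw [Finset.sum_congr rfl step1]
  have step2 : ∀ σ ∈ facesC X (m-1),
      (∑ ρ ∈ B.filter (fun ρ => σ ⊆ ρ), weightC X d ρ / (m : ℝ))
        = ∑ ρ ∈ B, if σ ⊆ ρ then weightC X d ρ / (m : ℝ) else 0 :=
    fun σ _ => Finset.sum_filter _ _
  rw [Finset.sum_congr rfl step2, Finset.sum_comm]
  unfold normC
  apply Finset.sum_congr rfl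
  intro ρ hρ
  rw [← Finset.sum_filter]
  have hρX : ρ ∈ X := (Finset.mem_filter.mp (hB hρ)).1
  have hρc : ρ.card = m := (Finset.mem_filter.mp (hB hρ)).2
  have hset : (facesC X (m-1)).filter (fun σ => σ ⊆ ρ) = ρ.powersetCard (m-1) := by
    ext σ
    simp only [facesC, Finset.mem_filter, Finset.mem_powersetCard]
    constructor
    · rintro ⟨⟨_, hc⟩, hsub⟩
      exact ⟨hsub, hc⟩
    · rintro ⟨hsub, hc⟩
      exact ⟨⟨hdc ρ hρX σ hsub, hc⟩, hsub⟩
  rw [hset, Finset.sum_const, Finset.card_powersetCard, hρc, hch, nsmul_eq_mul]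
  have hmR : (m : ℝ) ≠ 0 := Nat.cast_ne_zero.mpr (by omega)
  field_simp

lemma link_empty (X : Finset (Finset ℕ)) : link X ∅ = X := by
  unfold link
  simp

lemma locF_empty (A : Finset (Finset ℕ)) : locF ∅ A = A := by
  unfold locF
  simp

lemma fatD_subset_facesC (X : Finset (Finset ℕ)) (d kc : ℕ) (η : ℝ) (A : Finset (Finset ℕ))
    (hA : A ⊆ facesC X kc) : ∀ j, fatD X d kc η A j ⊆ facesC X (kc - j)
  | 0 => by simpa [fatD] using hA
  | (j+1) => by
      rw [fatD]
      exact Finset.filter_subset _ _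

lemma fatD_chain (X : Finset (Finset ℕ)) (d k : ℕ) (η : ℝ) (A : Finset (Finset ℕ))
    (hdc : ∀ σ ∈ X, ∀ τ ⊆ σ, τ ∈ X) (hk : k ≤ d) (hA : A ⊆ facesC X (k+1))
    (j : ℕ) (hj : j ≤ k) :
    normC X d (fatD X d (k+1) η A (j+1)) * η ^ 2 ^ j ≤ normC X d (fatD X d (k+1) η A j) := by
  classical
  have hsub := fatD_subset_facesC X d (k+1) η A hA j
  have hkey := sum_weight_loc X d (k+1-j) hdc (by omega) (by omega)
      (fatD X d (k+1) η A j) hsub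
  have e1 : k + 1 - (j+1) = k + 1 - j - 1 := by omega
  calc normC X d (fatD X d (k+1) η A (j+1)) * η ^ 2 ^ j
      = ∑ σ ∈ fatD X d (k+1) η A (j+1), weightC X d σ * η ^ 2 ^ j := by
        rw [normC, Finset.sum_mul]
    _ ≤ ∑ σ ∈ fatD X d (k+1) η A (j+1),
          weightC X d σ * normC (link X σ) (d - σ.card) (locF σ (fatD X d (k+1) η A j)) := by
        apply Finset.sum_le_sum
        intro σ hσ
        rw [fatD, Finset.mem_filter] at hσ
        exact mul_le_mul_of_nonneg_left hσ.2 (weightC_nonneg X d σ)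
    _ ≤ ∑ σ ∈ facesC X (k+1-j-1),
          weightC X d σ * normC (link X σ) (d - σ.card) (locF σ (fatD X d (k+1) η A j)) := by
        apply Finset.sum_le_sum_of_subset_of_nonneg
        · rw [fatD, ← e1]
          exact Finset.filter_subset _ _
        · intro σ _ _
          exact mul_nonneg (weightC_nonneg X d σ) (normC_nonneg _ _ _)
    _ = normC X d (fatD X d (k+1) η A j) := hkey

lemma fatD_norm_le (X : Finset (Finset ℕ)) (d k : ℕ) (η : ℝ) (A : Finset (Finset ℕ))
    (hdc : ∀ σ ∈ X, ∀ τ ⊆ σ, τ ∈ X) (hk : k ≤ d) (hA : A ⊆ facesC X (k+1)) (hη0 : 0 ≤ η) :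
    ∀ j, j ≤ k + 1 →
      normC X d (fatD X d (k+1) η A j) * η ^ (2 ^ j - 1) ≤ normC X d A := by
  intro j
  induction j with
  | zero => intro _; simp [fatD]
  | succ j ih =>
    intro hj
    have hj' : j ≤ k := by omega
    have h1 := fatD_chain X d k η A hdc hk hA j hj'
    have e : 2 ^ (j+1) - 1 = 2 ^ j + (2 ^ j - 1) := by
      have : 1 ≤ 2 ^ j := Nat.one_le_two_pow
      have h2 : 2 ^ (j+1) = 2 ^ j + 2 ^ j := by ring
      omega
    rw [e, pow_add, ← mul_assoc]
    calc normC X d (fatD X d (k+1) η A (j+1)) * η ^ 2 ^ j * η ^ (2 ^ j - 1)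
        ≤ normC X d (fatD X d (k+1) η A j) * η ^ (2 ^ j - 1) :=
          mul_le_mul_of_nonneg_right h1 (pow_nonneg hη0 _)
      _ ≤ normC X d A := ih (by omega)

/-- If `‖A‖ < η^{2^{k+1}}` then the empty set is not fat. -/
theorem statement_11 (d k : ℕ) (hk : k ≤ d) (X : Finset (Finset ℕ)) (hX : IsComplex X d)
    (A : Finset (Finset ℕ)) (hA : A ⊆ facesC X (k + 1))
    (η : ℝ) (hη0 : 0 < η) (hη1 : η < 1)
    (hsmall : normC X d A < η ^ 2 ^ (k + 1)) :
    ∅ ∉ fatS X d k η A (-1) := by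
  classical
  intro hmem
  have hdc := hX.2.1
  have hfat : fatS X d k η A (-1) = fatD X d (k+1) η A (k+1) := by
    have h : ((k : ℤ) - (-1)).toNat = k + 1 := by omega
    rw [fatS, h]
  rw [hfat] at hmem
  rw [fatD, Finset.mem_filter] at hmem
  obtain ⟨-, hbig⟩ := hmem
  rw [link_empty, locF_empty] at hbig
  simp only [Finset.card_empty, Nat.sub_zero] at hbig
  have hacc := fatD_norm_le X d k η A hdc hk hA hη0.le k (by omega)
  have h2 : η ^ 2 ^ k * η ^ (2 ^ k - 1)
      ≤ normC X d (fatD X d (k+1) η A k) * η ^ (2 ^ k - 1) :=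
    mul_le_mul_of_nonneg_right hbig (pow_nonneg hη0.le _)
  have h3 : η ^ (2 ^ (k+1) - 1) ≤ normC X d A := by
    have e : 2 ^ (k+1) - 1 = 2 ^ k + (2 ^ k - 1) := by
      have : 1 ≤ 2 ^ k := Nat.one_le_two_pow
      have h4 : 2 ^ (k+1) = 2 ^ k + 2 ^ k := by ring
      omega
    rw [e, pow_add]
    exact h2.trans hacc
  have h4 : η ^ (2 ^ (k+1)) < η ^ (2 ^ (k+1) - 1) := by
    apply pow_lt_pow_right_of_lt_one₀ hη0 hη1
    have : 1 ≤ 2 ^ (k+1) := Nat.one_le_two_pow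
    omega
  linarith


end HDExpansion
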